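/- Let G be a finite non-abelian p-group. Then Inn(G) = Aut_{Z(G)}^{L(G)}(G) if and only if the commutator subgroup G′ is contained in L(G) and L(G) is cyclic. -/

import Mathlib

/-- The absolute centre `L(G)`: elements fixed by every automorphism of `G`. -/
def absoluteCenter (G : Type*) [Group G] : Subgroup G where
  carrier := {g | ∀ α : MulAut G, α g = g}
  one_mem' := fun α => map_one α
  mul_mem' := fun {a b} ha hb α => by rw [map_mul, ha α, hb α]
  inv_mem' := fun {a} ha α => by rw [map_inv, ha α]

lemma absoluteCenter_le_center (G : Type*) [Group G] :
    absoluteCenter G ≤ Subgroup.center G := fun g hg => by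
  rw [Subgroup.mem_center_iff]
  intro h
  have h1 : h * g * h⁻¹ = g := by simpa [MulAut.conj_apply] using hg (MulAut.conj h)
  calc h * g = (h * g * h⁻¹) * h := by group
    _ = g * h := by rw [h1]

instance (G : Type*) [Group G] : (absoluteCenter G).Normal :=
  ⟨fun g hg h => by
    have h1 : h * g * h⁻¹ = g := by simpa [MulAut.conj_apply] using hg (MulAut.conj h)
    rw [h1]; exact hg⟩

/-- `L(G)` is central, hence abelian. -/
instance (G : Type*) [Group G] : CommGroup (absoluteCenter G) :=
  { (inferInstance : Group (absoluteCenter G)) with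
    mul_comm := fun a b => Subtype.ext
      ((Subgroup.mem_center_iff.mp (absoluteCenter_le_center G a.2) b.1).symm) }

/-- The group `Aut_{Z(G)}^{L(G)}(G)` of absolute central automorphisms of `G`
fixing the centre elementwise. -/
def autZL (G : Type*) [Group G] : Subgroup (MulAut G) where
  carrier := {α | (∀ g : G, g⁻¹ * α g ∈ absoluteCenter G) ∧
      ∀ z ∈ Subgroup.center G, α z = z}
  one_mem' := ⟨fun g => by simpa using (absoluteCenter G).one_mem, fun z _ => rfl⟩
  mul_mem' := fun {α β} hα hβ => by
    refine ⟨fun g => ?_, fun z hz => ?_⟩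
    · have h : g⁻¹ * (α * β) g = (g⁻¹ * β g) * ((β g)⁻¹ * α (β g)) := by
        simp [MulAut.mul_apply, mul_assoc]
      rw [h]; exact mul_mem (hβ.1 g) (hα.1 (β g))
    · show α (β z) = z
      rw [hβ.2 z hz, hα.2 z hz]
  inv_mem' := fun {α} hα => by
    refine ⟨fun g => ?_, fun z hz => ?_⟩
    · have h : g⁻¹ * α⁻¹ g = ((α⁻¹ g)⁻¹ * α (α⁻¹ g))⁻¹ := by
        simp [MulAut.inv_def, mul_assoc]
      rw [h]; exact inv_mem (hα.1 (α⁻¹ g))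
    · conv_lhs => rw [← hα.2 z hz]
      exact α.symm_apply_apply z

open scoped commutatorElement

/-! ### Auxiliary counting lemmas for finite abelian groups -/

lemma AuxAbsCent.finite_monoidHom (M N : Type*) [MulOneClass M] [MulOneClass N] [Finite M]
    [Finite N] : Finite (M →* N) :=
  Finite.of_injective (fun f => (f : M → N)) DFunLike.coe_injective

lemma AuxAbsCent.card_hom_zmod_le {n : ℕ} (hn : 0 < n) (C : Type*) [Group C] [Finite C]
    [IsCyclic C] : Nat.card (Multiplicative (ZMod n) →* C) ≤ n := by
  classical
  haveI : NeZero n := ⟨hn.ne'⟩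
  have key : ∀ (f : Multiplicative (ZMod n) →* C) (x : ZMod n),
      f (Multiplicative.ofAdd x) = f (Multiplicative.ofAdd 1) ^ x.val := by
    intro f x
    rw [← map_pow, ← ofAdd_nsmul]
    congr 1
    rw [nsmul_eq_mul, mul_one, ZMod.natCast_val, ZMod.cast_id]
  have hinj : Function.Injective
      (fun f : Multiplicative (ZMod n) →* C =>
        (⟨f (Multiplicative.ofAdd 1), by
          rw [← map_pow, ← ofAdd_nsmul, nsmul_eq_mul, mul_one, ZMod.natCast_self]
          exact map_one f⟩ : {c : C // c ^ n = 1})) := by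
    intro f g hfg
    refine MonoidHom.ext fun x => ?_
    have h1 : f (Multiplicative.ofAdd 1) = g (Multiplicative.ofAdd 1) :=
      congrArg Subtype.val hfg
    have : f (Multiplicative.ofAdd x.toAdd) = g (Multiplicative.ofAdd x.toAdd) := by
      rw [key f (Multiplicative.toAdd x), key g (Multiplicative.toAdd x), h1]
    rwa [ofAdd_toAdd] at this
  haveI : Finite (Multiplicative (ZMod n) →* C) := AuxAbsCent.finite_monoidHom _ _
  calc Nat.card (Multiplicative (ZMod n) →* C) ≤ Nat.card {c : C // c ^ n = 1} :=
        Nat.card_le_card_of_injective _ hinj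
    _ ≤ n := by
        haveI := Fintype.ofFinite C
        rw [Nat.card_eq_fintype_card, Fintype.card_subtype]
        exact IsCyclic.card_pow_eq_one_le hn

lemma AuxAbsCent.le_card_hom_zmod {d n m : ℕ} (hd : 0 < d) (hn : 0 < n) (hm : 0 < m)
    (hdn : d ∣ n) (hdm : d ∣ m) :
    d ≤ Nat.card (Multiplicative (ZMod n) →* Multiplicative (ZMod m)) := by
  classical
  haveI : NeZero d := ⟨hd.ne'⟩
  haveI : NeZero n := ⟨hn.ne'⟩
  haveI : NeZero m := ⟨hm.ne'⟩
  have hmd : 0 < m / d := Nat.div_pos (Nat.le_of_dvd hm hdm) hd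
  have hfd : (zmultiplesHom (ZMod m) ((m / d : ℕ) : ZMod m)) (d : ℤ) = 0 := by
    rw [zmultiplesHom_apply, zsmul_eq_mul]
    have : ((d : ℤ) : ZMod m) * ((m / d : ℕ) : ZMod m) = ((d * (m / d) : ℕ) : ZMod m) := by
      push_cast; ring
    rw [this, Nat.mul_div_cancel' hdm, ZMod.natCast_self]
  set E : ZMod d →+ ZMod m := ZMod.lift d ⟨zmultiplesHom (ZMod m) ((m / d : ℕ) : ZMod m), hfd⟩
    with hE
  have hEval : ∀ c : ZMod d, E c = ((c.val * (m / d) : ℕ) : ZMod m) := by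
    intro c
    have h1 : ((c.val : ℤ) : ZMod d) = c := by
      push_cast
      rw [ZMod.natCast_val, ZMod.cast_id]
    calc E c = E ((c.val : ℤ) : ZMod d) := by rw [h1]
      _ = (c.val : ℤ) • ((m / d : ℕ) : ZMod m) := by rw [hE, ZMod.lift_coe]; rfl
      _ = ((c.val * (m / d) : ℕ) : ZMod m) := by rw [zsmul_eq_mul]; push_cast; ring
  have hEinj : Function.Injective E := by
    intro c₁ c₂ h
    rw [hEval, hEval] at h
    have hlt : ∀ c : ZMod d, c.val * (m / d) < m := by
      intro c
      calc c.val * (m / d) < d * (m / d) :=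
            (Nat.mul_lt_mul_right hmd).mpr (ZMod.val_lt c)
        _ = m := Nat.mul_div_cancel' hdm
    have h2 := congrArg ZMod.val h
    rw [ZMod.val_cast_of_lt (hlt c₁), ZMod.val_cast_of_lt (hlt c₂)] at h2
    exact ZMod.val_injective d (Nat.eq_of_mul_eq_mul_right hmd h2)
  have hinj : Function.Injective
      (fun c : ZMod d => AddMonoidHom.toMultiplicative
        ((E.comp (AddMonoidHom.mulLeft c)).comp
          (ZMod.castHom hdn (ZMod d)).toAddMonoidHom)) := by
    intro c₁ c₂ h
    have h1 := DFunLike.congr_fun h (Multiplicative.ofAdd (1 : ZMod n))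
    simp only [AddMonoidHom.toMultiplicative_apply_apply, toAdd_ofAdd,
      AddMonoidHom.coe_comp, Function.comp_apply, RingHom.toAddMonoidHom_eq_coe,
      AddMonoidHom.coe_coe, map_one, AddMonoidHom.coe_mulLeft, mul_one] at h1
    exact hEinj (Multiplicative.ofAdd.injective h1)
  haveI : Finite (Multiplicative (ZMod n) →* Multiplicative (ZMod m)) :=
    AuxAbsCent.finite_monoidHom _ _
  calc d = Nat.card (ZMod d) := (Nat.card_zmod d).symm
    _ ≤ _ := Nat.card_le_card_of_injective _ hinj

/-- Homomorphisms into a product correspond to families of homomorphisms. -/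
def AuxAbsCent.homPiEquiv (M : Type*) [MulOneClass M] {J : Type*} (N : J → Type*)
    [∀ j, MulOneClass (N j)] : (M →* ∀ j, N j) ≃ ∀ j, (M →* N j) where
  toFun f j := (Pi.evalMonoidHom N j).comp f
  invFun F :=
    { toFun := fun x j => F j x
      map_one' := by funext j; simp
      map_mul' := fun x y => by funext j; simp }
  left_inv f := by ext x; rfl
  right_inv F := by funext j; ext x; rfl

lemma AuxAbsCent.card_monoidHom_le_of_isCyclic (A C : Type*) [CommGroup A] [Finite A]
    [CommGroup C] [Finite C] [IsCyclic C] : Nat.card (A →* C) ≤ Nat.card A := by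
  classical
  obtain ⟨ι, _, n, hn, ⟨e⟩⟩ := CommGroup.equiv_prod_multiplicative_zmod_of_finite A
  have e1 : (A →* C) ≃* (((i : ι) → Multiplicative (ZMod (n i))) →* C) :=
    MulEquiv.monoidHomCongrLeft e
  have e2 := Pi.monoidHomMulEquiv (fun i => Multiplicative (ZMod (n i))) C
  have hcard : Nat.card (A →* C) = ∏ i : ι, Nat.card (Multiplicative (ZMod (n i)) →* C) := by
    rw [Nat.card_congr (e1.trans e2).toEquiv, Nat.card_pi]
  have hcardA : Nat.card A = ∏ i : ι, n i := by
    rw [Nat.card_congr e.toEquiv, Nat.card_pi]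
    exact Finset.prod_congr rfl fun i _ => by
      rw [Nat.card_congr Multiplicative.toAdd, Nat.card_zmod]
  rw [hcard, hcardA]
  exact Finset.prod_le_prod' fun i _ =>
    AuxAbsCent.card_hom_zmod_le (Nat.zero_lt_of_lt (hn i)) C

lemma AuxAbsCent.isCyclic_of_mulEquiv_monoidHom {p : ℕ} [Fact p.Prime] (A L : Type*)
    [CommGroup A] [Finite A] [Nontrivial A] [CommGroup L] [Finite L] (hA : IsPGroup p A)
    (hL : IsPGroup p L) (e : A ≃* (A →* L)) : IsCyclic L := by
  classical
  have hp : p.Prime := Fact.out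
  obtain ⟨J, _, m, hm, ⟨eL⟩⟩ := CommGroup.equiv_prod_multiplicative_zmod_of_finite L
  rcases subsingleton_or_nontrivial J with hJ | hJ
  · rcases isEmpty_or_nonempty J with h0 | h1
    · exact isCyclic_of_surjective eL.symm eL.symm.surjective
    · haveI : Unique J := ⟨⟨h1.some⟩, fun j => Subsingleton.elim _ _⟩
      exact isCyclic_of_surjective (eL.trans (MulEquiv.piUnique _)).symm
        (eL.trans (MulEquiv.piUnique _)).symm.surjective
  · exfalso
    obtain ⟨I, _, n, hn, ⟨eA⟩⟩ := CommGroup.equiv_prod_multiplicative_zmod_of_finite A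
    haveI : Nonempty I := by
      by_contra hI
      rw [not_nonempty_iff] at hI
      exact (not_subsingleton A) eA.toEquiv.subsingleton
    have horderA : ∀ i : I, n i = orderOf (eA.symm (Pi.mulSingle i
        (Multiplicative.ofAdd (1 : ZMod (n i))))) := fun i => by
      simpa only [MulEquiv.orderOf_eq, orderOf_piMulSingle, orderOf_ofAdd_eq_addOrderOf]
        using (ZMod.addOrderOf_one (n i)).symm
    have hpownA : ∀ i : I, ∃ a : ℕ, n i = p ^ a := by
      intro i
      obtain ⟨k, hk⟩ := hA (eA.symm (Pi.mulSingle i (Multiplicative.ofAdd (1 : ZMod (n i)))))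
      have h1 : n i ∣ p ^ k := by
        rw [horderA i]; exact orderOf_dvd_of_pow_eq_one hk
      obtain ⟨a, _, ha⟩ := (Nat.dvd_prime_pow hp).mp h1
      exact ⟨a, ha⟩
    choose a hna using hpownA
    have horderL : ∀ j : J, m j = orderOf (eL.symm (Pi.mulSingle j
        (Multiplicative.ofAdd (1 : ZMod (m j))))) := fun j => by
      simpa only [MulEquiv.orderOf_eq, orderOf_piMulSingle, orderOf_ofAdd_eq_addOrderOf]
        using (ZMod.addOrderOf_one (m j)).symm
    have hpownL : ∀ j : J, ∃ b : ℕ, m j = p ^ b := by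
      intro j
      obtain ⟨k, hk⟩ := hL (eL.symm (Pi.mulSingle j (Multiplicative.ofAdd (1 : ZMod (m j)))))
      have h1 : m j ∣ p ^ k := by
        rw [horderL j]; exact orderOf_dvd_of_pow_eq_one hk
      obtain ⟨b, _, hb⟩ := (Nat.dvd_prime_pow hp).mp h1
      exact ⟨b, hb⟩
    choose b hmb using hpownL
    have ha1 : ∀ i, a i ≠ 0 := fun i h => by
      have := hn i; rw [hna i, h, pow_zero] at this; omega
    have hb1 : ∀ j, b j ≠ 0 := fun j h => by
      have := hm j; rw [hmb j, h, pow_zero] at this; omega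
    obtain ⟨js, -, hjs⟩ := Finset.exists_max_image Finset.univ b
      ⟨Classical.arbitrary J, Finset.mem_univ _⟩
    have hexpA : ∀ i, n i ∣ Monoid.exponent A := fun i => by
      rw [horderA i]; exact Monoid.order_dvd_exponent _
    have hexp1 : Monoid.exponent A = Monoid.exponent (A →* L) :=
      Monoid.exponent_eq_of_mulEquiv e
    have hexp2 : Monoid.exponent (A →* L) ∣ Monoid.exponent L :=
      Monoid.exponent_dvd_of_forall_pow_eq_one fun f => by
        ext x
        simp only [MonoidHom.pow_apply, MonoidHom.one_apply]
        exact Monoid.pow_exponent_eq_one (f x)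
    have hexp3 : Monoid.exponent L ∣ p ^ (b js) :=
      Monoid.exponent_dvd_of_forall_pow_eq_one fun x => by
        have h1 : eL (x ^ p ^ b js) = 1 := by
          rw [map_pow]
          funext j
          have hxm : (eL x j) ^ m j = 1 := by
            have h2 : Multiplicative.toAdd ((eL x j) ^ m j) = 0 := by
              rw [toAdd_pow, nsmul_eq_mul, ZMod.natCast_self, zero_mul]
            rwa [toAdd_eq_zero] at h2
          obtain ⟨k, hk⟩ : m j ∣ p ^ b js := by
            rw [hmb j]; exact pow_dvd_pow p (hjs j (Finset.mem_univ j))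
          simp only [Pi.pow_apply, Pi.one_apply]
          rw [hk, pow_mul, hxm, one_pow]
        exact eL.injective (by rw [h1, map_one])
    have hdvdm : ∀ i, n i ∣ m js := fun i => by
      have h1 : Monoid.exponent A ∣ Monoid.exponent L := by rw [hexp1]; exact hexp2
      rw [hmb js]
      exact dvd_trans (hexpA i) (dvd_trans h1 hexp3)
    set c : I → J → ℕ := fun i j =>
      Nat.card (Multiplicative (ZMod (n i)) →* Multiplicative (ZMod (m j))) with hc
    have hposn : ∀ i, 0 < n i := fun i => Nat.zero_lt_of_lt (hn i)
    have hposm : ∀ j, 0 < m j := fun j => Nat.zero_lt_of_lt (hm j)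
    have hcardA : Nat.card A = ∏ i : I, n i := by
      rw [Nat.card_congr eA.toEquiv, Nat.card_pi]
      exact Finset.prod_congr rfl fun i _ => by
        rw [Nat.card_congr Multiplicative.toAdd, Nat.card_zmod]
    have hcardHom : Nat.card (A →* L) = ∏ i : I, ∏ j : J, c i j := by
      have e1 : (A →* L) ≃* ((∀ i, Multiplicative (ZMod (n i))) →* L) :=
        MulEquiv.monoidHomCongrLeft eA
      have e2 := Pi.monoidHomMulEquiv (fun i => Multiplicative (ZMod (n i))) L
      rw [Nat.card_congr (e1.trans e2).toEquiv, Nat.card_pi]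
      refine Finset.prod_congr rfl fun i _ => ?_
      have e3 : (Multiplicative (ZMod (n i)) →* L) ≃*
          (Multiplicative (ZMod (n i)) →* (∀ j, Multiplicative (ZMod (m j)))) :=
        MulEquiv.monoidHomCongrRight eL
      rw [Nat.card_congr (e3.toEquiv.trans (AuxAbsCent.homPiEquiv _ _)), Nat.card_pi]
    have hEq : (∏ i : I, n i) = ∏ i : I, ∏ j : J, c i j := by
      rw [← hcardA, ← hcardHom]
      exact Nat.card_congr e.toEquiv
    obtain ⟨j', hj'⟩ := exists_ne js
    have hcpos : ∀ i j, 1 ≤ c i j := fun i j => by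
      haveI : NeZero (n i) := ⟨(hposn i).ne'⟩
      haveI : NeZero (m j) := ⟨(hposm j).ne'⟩
      haveI : Finite (Multiplicative (ZMod (n i)) →* Multiplicative (ZMod (m j))) :=
        AuxAbsCent.finite_monoidHom _ _
      haveI : Nonempty (Multiplicative (ZMod (n i)) →* Multiplicative (ZMod (m j))) := ⟨1⟩
      exact Nat.card_pos
    have hlow : ∀ i, n i * p ≤ ∏ j : J, c i j := fun i => by
      have h1 : c i js * c i j' ≤ ∏ j : J, c i j := by
        rw [← Finset.prod_pair (Ne.symm hj')]
        exact Finset.prod_le_prod_of_subset_of_one_le' (Finset.subset_univ _)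
          (fun k _ _ => hcpos i k)
      have h2 : n i ≤ c i js :=
        AuxAbsCent.le_card_hom_zmod (hposn i) (hposn i) (hposm js) dvd_rfl (hdvdm i)
      have h3 : p ≤ c i j' :=
        AuxAbsCent.le_card_hom_zmod hp.pos (hposn i) (hposm j')
          (by rw [hna i]; exact dvd_pow_self p (ha1 i))
          (by rw [hmb j']; exact dvd_pow_self p (hb1 j'))
      calc n i * p ≤ c i js * c i j' := Nat.mul_le_mul h2 h3
        _ ≤ _ := h1
    have hbig : (∏ i : I, n i) * p ^ (Finset.univ : Finset I).card
        ≤ ∏ i : I, ∏ j : J, c i j := by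
      rw [← Finset.prod_const, ← Finset.prod_mul_distrib]
      exact Finset.prod_le_prod' fun i _ => hlow i
    have hIcard : (Finset.univ : Finset I).card ≠ 0 :=
      Finset.card_ne_zero_of_mem (Finset.mem_univ (Classical.arbitrary I))
    have h2p : 2 ≤ p ^ (Finset.univ : Finset I).card :=
      le_trans hp.two_le (Nat.le_self_pow hIcard p)
    have hprodpos : 0 < ∏ i : I, n i := Finset.prod_pos fun i _ => hposn i
    have hfinal : (∏ i : I, n i) * 2 ≤ (∏ i : I, n i) := by
      calc (∏ i : I, n i) * 2 ≤ (∏ i : I, n i) * p ^ (Finset.univ : Finset I).card :=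
            Nat.mul_le_mul_left _ h2p
        _ ≤ ∏ i : I, ∏ j : J, c i j := hbig
        _ = ∏ i : I, n i := hEq.symm
    omega

/-! ### The correspondence between `autZL G` and homomorphisms `G/Z(G) →* L(G)` -/

lemma mem_autZL_iff {G : Type*} [Group G] {α : MulAut G} :
    α ∈ autZL G ↔ (∀ g : G, g⁻¹ * α g ∈ absoluteCenter G) ∧
      ∀ z ∈ Subgroup.center G, α z = z :=
  Iff.rfl

lemma mem_absoluteCenter_iff {G : Type*} [Group G] {g : G} :
    g ∈ absoluteCenter G ↔ ∀ α : MulAut G, α g = g :=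
  Iff.rfl

/-- The homomorphism `G →* L(G)` attached to an element of `autZL G`. -/
def autZLtoHom {G : Type*} [Group G] (α : ↥(autZL G)) : G →* absoluteCenter G where
  toFun g := ⟨g⁻¹ * α.1 g, (mem_autZL_iff.mp α.2).1 g⟩
  map_one' := by ext; simp
  map_mul' g h := by
    ext
    show (g * h)⁻¹ * α.1 (g * h) = (g⁻¹ * α.1 g) * (h⁻¹ * α.1 h)
    have hu : h⁻¹ * (g⁻¹ * α.1 g) = (g⁻¹ * α.1 g) * h⁻¹ :=
      Subgroup.mem_center_iff.mp
        (absoluteCenter_le_center G ((mem_autZL_iff.mp α.2).1 g)) h⁻¹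
    calc (g * h)⁻¹ * α.1 (g * h) = h⁻¹ * (g⁻¹ * α.1 g) * α.1 h := by
          rw [map_mul]; group
      _ = (g⁻¹ * α.1 g) * h⁻¹ * α.1 h := by rw [hu]
      _ = _ := by group

lemma autZLtoHom_ker {G : Type*} [Group G] (α : ↥(autZL G)) :
    Subgroup.center G ≤ (autZLtoHom α).ker := by
  intro z hz
  rw [MonoidHom.mem_ker]
  ext
  show z⁻¹ * α.1 z = 1
  rw [(mem_autZL_iff.mp α.2).2 z hz, inv_mul_cancel]

/-- The homomorphism from `autZL G` to `Hom(G/Z(G), L(G))`. -/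
def theta (G : Type*) [Group G] :
    ↥(autZL G) →* ((G ⧸ Subgroup.center G) →* absoluteCenter G) where
  toFun α := QuotientGroup.lift _ (autZLtoHom α) (autZLtoHom_ker α)
  map_one' := by
    ext g
    show g⁻¹ * ((1 : MulAut G) g) = (1 : G)
    simp
  map_mul' α β := by
    ext g
    show g⁻¹ * (α.1 * β.1) g = (g⁻¹ * α.1 g) * (g⁻¹ * β.1 g)
    have hfix : α.1 (g⁻¹ * β.1 g) = g⁻¹ * β.1 g :=
      mem_absoluteCenter_iff.mp ((mem_autZL_iff.mp β.2).1 g) α.1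
    have hv : β.1 g = g * (g⁻¹ * β.1 g) := by group
    calc g⁻¹ * (α.1 * β.1) g = g⁻¹ * α.1 (β.1 g) := by rw [MulAut.mul_apply]
      _ = g⁻¹ * α.1 (g * (g⁻¹ * β.1 g)) := by rw [← hv]
      _ = g⁻¹ * (α.1 g * (g⁻¹ * β.1 g)) := by rw [map_mul, hfix]
      _ = (g⁻¹ * α.1 g) * (g⁻¹ * β.1 g) := by group

lemma theta_injective {G : Type*} [Group G] : Function.Injective (theta G) := by
  intro α β h
  have h1 : ∀ g : G, autZLtoHom α g = autZLtoHom β g := fun g =>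
    DFunLike.congr_fun h (QuotientGroup.mk g)
  refine Subtype.ext (MulEquiv.ext fun g => ?_)
  have h2 : g⁻¹ * α.1 g = g⁻¹ * β.1 g := congrArg Subtype.val (h1 g)
  exact mul_left_cancel h2

lemma theta_surjective {G : Type*} [Group G] [Finite G] :
    Function.Surjective (theta G) := by
  intro F
  set f : G →* absoluteCenter G := F.comp (QuotientGroup.mk' (Subgroup.center G)) with hf
  have hcentral : ∀ (g x : G), x * (f g : G) = (f g : G) * x := fun g x =>
    Subgroup.mem_center_iff.mp (absoluteCenter_le_center G (f g).2) x
  have hfz : ∀ z ∈ Subgroup.center G, f z = 1 := fun z hz => by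
    rw [hf]
    show F (QuotientGroup.mk z) = 1
    rw [(QuotientGroup.eq_one_iff z).mpr hz, map_one]
  set αh : G →* G :=
    { toFun := fun g => g * (f g : G)
      map_one' := by simp
      map_mul' := fun g h => by
        show (g * h) * ((f (g * h) : G)) = (g * (f g : G)) * (h * (f h : G))
        rw [map_mul]
        push_cast
        calc g * h * ((f g : G) * (f h : G)) = g * (h * (f g : G)) * (f h : G) := by group
          _ = g * ((f g : G) * h) * (f h : G) := by rw [hcentral g h]
          _ = (g * (f g : G)) * (h * (f h : G)) := by group } with hαh
  have hinj : Function.Injective αh := by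
    rw [injective_iff_map_eq_one]
    intro g hg
    have hg' : g * (f g : G) = 1 := hg
    have hgL : g ∈ absoluteCenter G := by
      have hgi : g = ((f g : G))⁻¹ := by
        rw [eq_inv_iff_mul_eq_one]; exact hg'
      rw [hgi]
      exact (absoluteCenter G).inv_mem (f g).2
    have h1 : f g = 1 := hfz g (absoluteCenter_le_center G hgL)
    rw [h1] at hg'
    simpa using hg'
  have hbij := Finite.injective_iff_bijective.mp hinj
  set α : MulAut G := MulEquiv.ofBijective αh hbij with hα
  have happ : ∀ g : G, α g = g * (f g : G) := fun g => rfl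
  have hmem : α ∈ autZL G := by
    refine mem_autZL_iff.mpr ⟨fun g => ?_, fun z hz => ?_⟩
    · rw [happ g, inv_mul_cancel_left]
      exact (f g).2
    · rw [happ z, hfz z hz]
      simp
  refine ⟨⟨α, hmem⟩, ?_⟩
  ext g
  show g⁻¹ * α g = ((F (QuotientGroup.mk g) : absoluteCenter G) : G)
  rw [happ g, inv_mul_cancel_left]
  rfl

/-- Let `G` be a finite non-abelian `p`-group.  Then `Inn(G) = Aut_{Z(G)}^{L(G)}(G)` if
and only if `G' ≤ L(G)` and `L(G)` is cyclic. -/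
theorem inn_eq_autZL_iff {p : ℕ} [Fact p.Prime] (G : Type*) [Group G] [Finite G]
    (hG : IsPGroup p G) (hna : ∃ a b : G, a * b ≠ b * a) :
    (MulAut.conj : G →* MulAut G).range = autZL G ↔
      commutator G ≤ absoluteCenter G ∧ IsCyclic (absoluteCenter G) := by
  classical
  haveI : Finite (MulAut G) :=
    Finite.of_injective (fun e : MulAut G => (e : G → G)) DFunLike.coe_injective
  -- the kernel of the conjugation homomorphism is the centre
  have hker : (MulAut.conj : G →* MulAut G).ker = Subgroup.center G := by
    ext h
    rw [MonoidHom.mem_ker, Subgroup.mem_center_iff]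
    constructor
    · intro hh g
      have h3 : h * g * h⁻¹ = g := by
        have := DFunLike.congr_fun hh g
        simpa [MulAut.conj_apply] using this
      calc g * h = (h * g * h⁻¹) * h := by rw [h3]
        _ = h * g := by group
    · intro hh
      ext g
      show h * g * h⁻¹ = g
      calc h * g * h⁻¹ = (g * h) * h⁻¹ := by rw [hh g]
        _ = g := by group
  -- `Inn(G) ≤ autZL G` iff the commutator subgroup is inside the absolute centre
  have hLe_iff : (MulAut.conj : G →* MulAut G).range ≤ autZL G ↔
      commutator G ≤ absoluteCenter G := by
    constructor
    · intro hle
      rw [commutator_def, Subgroup.commutator_le]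
      intro g₁ _ g₂ _
      have hm : MulAut.conj g₂ ∈ autZL G := hle ⟨g₂, rfl⟩
      have h1 := (mem_autZL_iff.mp hm).1 g₁⁻¹
      rw [MulAut.conj_apply] at h1
      have heq : ⁅g₁, g₂⁆ = (g₁⁻¹)⁻¹ * (g₂ * g₁⁻¹ * g₂⁻¹) := by
        rw [commutatorElement_def]; group
      rw [heq]; exact h1
    · intro hcomm β hβ
      obtain ⟨h, rfl⟩ := hβ
      refine mem_autZL_iff.mpr ⟨fun g => ?_, fun z hz => ?_⟩
      · have hm : ⁅g⁻¹, h⁆ ∈ commutator G :=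
          Subgroup.commutator_mem_commutator (Subgroup.mem_top _) (Subgroup.mem_top _)
        have heq : g⁻¹ * (MulAut.conj h) g = ⁅g⁻¹, h⁆ := by
          rw [MulAut.conj_apply, commutatorElement_def]; group
        rw [heq]; exact hcomm hm
      · rw [MulAut.conj_apply]
        calc h * z * h⁻¹ = (z * h) * h⁻¹ := by rw [Subgroup.mem_center_iff.mp hz h]
          _ = z := by group
  constructor
  · intro hEq
    have hcomm : commutator G ≤ absoluteCenter G := hLe_iff.mp hEq.le
    refine ⟨hcomm, ?_⟩
    letI : CommGroup (G ⧸ Subgroup.center G) :=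
      { (inferInstance : Group (G ⧸ Subgroup.center G)) with
        mul_comm := fun x y => by
          refine QuotientGroup.induction_on x fun g =>
            QuotientGroup.induction_on y fun h => ?_
          show QuotientGroup.mk (g * h) = QuotientGroup.mk (h * g)
          rw [QuotientGroup.eq]
          have hm : ⁅h⁻¹, g⁻¹⁆ ∈ commutator G :=
            Subgroup.commutator_mem_commutator (Subgroup.mem_top _) (Subgroup.mem_top _)
          have heq : (g * h)⁻¹ * (h * g) = ⁅h⁻¹, g⁻¹⁆ := by
            rw [commutatorElement_def]; group
          rw [heq]
          exact absoluteCenter_le_center G (hcomm hm) }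
    haveI : Nontrivial (G ⧸ Subgroup.center G) := by
      obtain ⟨x, y, hxy⟩ := hna
      refine ⟨⟨QuotientGroup.mk y, 1, fun h => hxy ?_⟩⟩
      have hy : y ∈ Subgroup.center G := (QuotientGroup.eq_one_iff y).mp h
      exact Subgroup.mem_center_iff.mp hy x
    have e : (G ⧸ Subgroup.center G) ≃*
        ((G ⧸ Subgroup.center G) →* absoluteCenter G) :=
      ((QuotientGroup.quotientMulEquivOfEq hker.symm).trans
        (QuotientGroup.quotientKerEquivRange (MulAut.conj : G →* MulAut G))).trans
        ((MulEquiv.subgroupCongr hEq).trans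
          (MulEquiv.ofBijective (theta G) ⟨theta_injective, theta_surjective⟩))
    exact AuxAbsCent.isCyclic_of_mulEquiv_monoidHom (G ⧸ Subgroup.center G)
      (absoluteCenter G) (hG.to_quotient _) (hG.to_subgroup _) e
  · rintro ⟨hcomm, hcyc⟩
    have hle := hLe_iff.mpr hcomm
    letI : CommGroup (G ⧸ Subgroup.center G) :=
      { (inferInstance : Group (G ⧸ Subgroup.center G)) with
        mul_comm := fun x y => by
          refine QuotientGroup.induction_on x fun g =>
            QuotientGroup.induction_on y fun h => ?_
          show QuotientGroup.mk (g * h) = QuotientGroup.mk (h * g)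
          rw [QuotientGroup.eq]
          have hm : ⁅h⁻¹, g⁻¹⁆ ∈ commutator G :=
            Subgroup.commutator_mem_commutator (Subgroup.mem_top _) (Subgroup.mem_top _)
          have heq : (g * h)⁻¹ * (h * g) = ⁅h⁻¹, g⁻¹⁆ := by
            rw [commutatorElement_def]; group
          rw [heq]
          exact absoluteCenter_le_center G (hcomm hm) }
    haveI : Finite ((G ⧸ Subgroup.center G) →* absoluteCenter G) :=
      AuxAbsCent.finite_monoidHom _ _
    refine Subgroup.eq_of_le_of_card_ge hle ?_
    have h1 : Nat.card ↥(autZL G) ≤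
        Nat.card ((G ⧸ Subgroup.center G) →* absoluteCenter G) :=
      Nat.card_le_card_of_injective _ theta_injective
    have h2 : Nat.card ((G ⧸ Subgroup.center G) →* absoluteCenter G) ≤
        Nat.card (G ⧸ Subgroup.center G) :=
      AuxAbsCent.card_monoidHom_le_of_isCyclic _ _
    have h3 : Nat.card (G ⧸ Subgroup.center G) =
        Nat.card ↥(MulAut.conj : G →* MulAut G).range :=
      Nat.card_congr ((QuotientGroup.quotientMulEquivOfEq hker.symm).trans
        (QuotientGroup.quotientKerEquivRange (MulAut.conj : G →* MulAut G))).toEquiv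
    omega
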